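/- Let C₁ and C₂ be conjugations on a complex Hilbert space H that commute: C₁C₂ = C₂C₁. Then the map C̃ on H ⊕ H defined by C̃(x, y) = ((C₂x + C₁y)/√2, (C₁x − C₂y)/√2) is a conjugation on H ⊕ H. -/

import Mathlib

open scoped ComplexConjugate

section Aux

variable {H : Type*} [NormedAddCommGroup H] [InnerProductSpace ℂ H]

lemma conjAux_add (C : H → H)
    (hlin : ∀ (α β : ℂ) (x y : H), C (α • x + β • y) = conj α • C x + conj β • C y)
    (x y : H) : C (x + y) = C x + C y := by
  have h := hlin 1 1 x y
  simpa using h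

lemma conjAux_sub (C : H → H)
    (hlin : ∀ (α β : ℂ) (x y : H), C (α • x + β • y) = conj α • C x + conj β • C y)
    (x y : H) : C (x - y) = C x - C y := by
  have h := hlin 1 (-1) x y
  simpa [sub_eq_add_neg] using h

lemma conjAux_smul (C : H → H)
    (hlin : ∀ (α β : ℂ) (x y : H), C (α • x + β • y) = conj α • C x + conj β • C y)
    (α : ℂ) (x : H) : C (α • x) = conj α • C x := by
  have h := hlin α 0 x x
  simpa using h

end Aux

/-- If `C₁`, `C₂` are commuting conjugations on a complex Hilbert space `H`, then the map
`C̃(x, y) = ((C₂x + C₁y)/√2, (C₁x − C₂y)/√2)` on the Hilbert direct sum `H ⊕ H` is a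
conjugation: conjugate-linear, involutive and isometric. -/
theorem block_C1_C2_conjugation {H : Type*} [NormedAddCommGroup H] [InnerProductSpace ℂ H]
    [CompleteSpace H] (C₁ C₂ : H → H)
    (hlin₁ : ∀ (α β : ℂ) (x y : H), C₁ (α • x + β • y) = conj α • C₁ x + conj β • C₁ y)
    (hinv₁ : ∀ x, C₁ (C₁ x) = x)
    (hiso₁ : ∀ x, ‖C₁ x‖ = ‖x‖)
    (hlin₂ : ∀ (α β : ℂ) (x y : H), C₂ (α • x + β • y) = conj α • C₂ x + conj β • C₂ y)
    (hinv₂ : ∀ x, C₂ (C₂ x) = x)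
    (hiso₂ : ∀ x, ‖C₂ x‖ = ‖x‖)
    (hcomm : ∀ x, C₁ (C₂ x) = C₂ (C₁ x)) :
    ∃ C : WithLp 2 (H × H) → WithLp 2 (H × H),
      (∀ z : WithLp 2 (H × H),
        (WithLp.equiv 2 (H × H)) (C z) =
          (((Real.sqrt 2 : ℂ))⁻¹ • (C₂ ((WithLp.equiv 2 (H × H)) z).1 + C₁ ((WithLp.equiv 2 (H × H)) z).2),
           ((Real.sqrt 2 : ℂ))⁻¹ • (C₁ ((WithLp.equiv 2 (H × H)) z).1 - C₂ ((WithLp.equiv 2 (H × H)) z).2))) ∧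
      (∀ (α β : ℂ) (x y : WithLp 2 (H × H)),
          C (α • x + β • y) = conj α • C x + conj β • C y) ∧
      (∀ z, C (C z) = z) ∧
      (∀ z, ‖C z‖ = ‖z‖) := by
  have add₁ := conjAux_add C₁ hlin₁
  have sub₁ := conjAux_sub C₁ hlin₁
  have smul₁ := conjAux_smul C₁ hlin₁
  have add₂ := conjAux_add C₂ hlin₂
  have sub₂ := conjAux_sub C₂ hlin₂
  have smul₂ := conjAux_smul C₂ hlin₂
  set s : ℂ := ((Real.sqrt 2 : ℂ))⁻¹ with hs
  have hsconj : conj s = s := by simp [hs]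
  have hss : s * (s * 2) = 1 := by
    have h2 : ((Real.sqrt 2 : ℝ) : ℂ) * ((Real.sqrt 2 : ℝ) : ℂ) = 2 := by
      norm_cast
      rw [Real.mul_self_sqrt] <;> norm_num
    rw [hs, ← mul_assoc, ← mul_inv, h2]
    norm_num
  refine ⟨fun z => (WithLp.equiv 2 (H × H)).symm
      (s • (C₂ z.ofLp.1 + C₁ z.ofLp.2),
       s • (C₁ z.ofLp.1 - C₂ z.ofLp.2)), ?_, ?_, ?_, ?_⟩
  · intro z
    rfl
  · -- conjugate-linearity
    intro α β x y
    refine (WithLp.ext_iff 2).2 (Prod.ext ?_ ?_)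
    · show s • (C₂ (α • x.ofLp.1 + β • y.ofLp.1)
          + C₁ (α • x.ofLp.2 + β • y.ofLp.2)) =
        conj α • (s • (C₂ x.ofLp.1 + C₁ x.ofLp.2))
          + conj β • (s • (C₂ y.ofLp.1 + C₁ y.ofLp.2))
      rw [hlin₂, hlin₁]
      module
    · show s • (C₁ (α • x.ofLp.1 + β • y.ofLp.1)
          - C₂ (α • x.ofLp.2 + β • y.ofLp.2)) =
        conj α • (s • (C₁ x.ofLp.1 - C₂ x.ofLp.2))
          + conj β • (s • (C₁ y.ofLp.1 - C₂ y.ofLp.2))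
      rw [hlin₁, hlin₂]
      module
  · -- involution
    intro z
    refine (WithLp.ext_iff 2).2 (Prod.ext ?_ ?_)
    · show s • (C₂ (s • (C₂ z.ofLp.1 + C₁ z.ofLp.2))
          + C₁ (s • (C₁ z.ofLp.1 - C₂ z.ofLp.2))) = z.ofLp.1
      rw [smul₂, smul₁, hsconj, add₂, sub₁, hinv₂, hinv₁, hcomm]
      match_scalars
      · linear_combination hss
      · ring
    · show s • (C₁ (s • (C₂ z.ofLp.1 + C₁ z.ofLp.2))
          - C₂ (s • (C₁ z.ofLp.1 - C₂ z.ofLp.2))) = z.ofLp.2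
      rw [smul₁, smul₂, hsconj, add₁, sub₂, hinv₁, hinv₂, hcomm]
      match_scalars
      · ring
      · linear_combination hss
  · -- isometry
    intro z
    set a := z.ofLp.1 with ha
    set b := z.ofLp.2 with hb
    have hnorm_s : ‖s‖ = (Real.sqrt 2)⁻¹ := by
      rw [hs, norm_inv, Complex.norm_real, Real.norm_eq_abs,
        abs_of_nonneg (Real.sqrt_nonneg 2)]
    have hkey : ‖C₁ a - C₂ b‖ = ‖C₂ a - C₁ b‖ := by
      have h1 : C₁ (C₂ (C₁ a - C₂ b)) = C₂ a - C₁ b := by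
        rw [sub₂, hinv₂, sub₁, hcomm, hinv₁]
      calc ‖C₁ a - C₂ b‖ = ‖C₂ (C₁ a - C₂ b)‖ := (hiso₂ _).symm
        _ = ‖C₁ (C₂ (C₁ a - C₂ b))‖ := (hiso₁ _).symm
        _ = ‖C₂ a - C₁ b‖ := by rw [h1]
    have hpar := parallelogram_law_with_norm ℂ (C₂ a) (C₁ b)
    have hsq2 : ((Real.sqrt 2)⁻¹ : ℝ) ^ 2 = 2⁻¹ := by
      rw [inv_pow, Real.sq_sqrt] <;> norm_num
    have hCz : ‖(WithLp.equiv 2 (H × H)).symm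
        (s • (C₂ a + C₁ b), s • (C₁ a - C₂ b))‖ ^ 2 = ‖z‖ ^ 2 := by
      rw [WithLp.prod_norm_sq_eq_of_L2, WithLp.prod_norm_sq_eq_of_L2]
      have hf : (WithLp.fst ((WithLp.equiv 2 (H × H)).symm
          (s • (C₂ a + C₁ b), s • (C₁ a - C₂ b)))) = s • (C₂ a + C₁ b) := rfl
      have hg : (WithLp.snd ((WithLp.equiv 2 (H × H)).symm
          (s • (C₂ a + C₁ b), s • (C₁ a - C₂ b)))) = s • (C₁ a - C₂ b) := rfl
      rw [hf, hg, norm_smul, norm_smul, hnorm_s, hkey]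
      have hza : z.fst = a := rfl
      have hzb : z.snd = b := rfl
      rw [hza, hzb, ← hiso₂ a, ← hiso₁ b, mul_pow, mul_pow, hsq2]
      nlinarith [hpar]
    have h1 : ‖(WithLp.equiv 2 (H × H)).symm
        (s • (C₂ a + C₁ b), s • (C₁ a - C₂ b))‖ = ‖z‖ := by
      have hn1 := norm_nonneg ((WithLp.equiv 2 (H × H)).symm
        (s • (C₂ a + C₁ b), s • (C₁ a - C₂ b)))
      have hn2 := norm_nonneg z
      nlinarith [hCz]
    exact h1
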